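/- No binary word of length at least 8 with exactly five runs is minimal forbidden for mesosome-avoidance. -/

import Mathlib

/-- `x'` is a conjugate (cyclic shift) of `x`. -/
def Conj (x x' : List Bool) : Prop := ∃ u v : List Bool, x = u ++ v ∧ x' = v ++ u

/-- A mesosome: a nonempty word of the form `x ++ x'` with `x'` a conjugate of `x`, `x' ≠ x`. -/
def Mesosome (w : List Bool) : Prop :=
  ∃ x x' : List Bool, w = x ++ x' ∧ Conj x x' ∧ x' ≠ x ∧ x ≠ []

/-- A word is mesosome-free if no factor (contiguous subword) is a mesosome. -/
def MesosomeFree (w : List Bool) : Prop := ∀ f : List Bool, f <:+: w → ¬ Mesosome f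

/-- `w` is minimal forbidden: it is a mesosome, but no proper factor of it is. -/
def MinimalForbidden (w : List Bool) : Prop :=
  Mesosome w ∧ ∀ f : List Bool, f <:+: w → f ≠ w → ¬ Mesosome f

/-- The number of runs (maximal blocks of identical letters) of a word. -/
def runCount (w : List Bool) : ℕ := (w.destutter (· ≠ ·)).length


lemma meso_mk (u v : List Bool) (h1 : v ++ u ≠ u ++ v) (h2 : u ++ v ≠ []) :
    Mesosome ((u ++ v) ++ (v ++ u)) :=
  ⟨u ++ v, v ++ u, rfl, ⟨u, v, rfl, rfl⟩, h1, h2⟩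

lemma not_mf {w f : List Bool} (h1 : f <:+: w) (h2 : f.length < w.length)
    (h3 : Mesosome f) : ¬ MinimalForbidden w := by
  rintro ⟨-, hmin⟩
  exact hmin f h1 (fun h => by subst h; exact lt_irrefl _ h2) h3

lemma runsplit : ∀ (t : List Bool) (x : Bool), ∃ (i : ℕ) (u : List Bool),
    x :: t = List.replicate (i + 1) x ++ u ∧
    List.destutter' (· ≠ ·) x t = x :: u.destutter (· ≠ ·) := by
  intro t
  induction t with
  | nil => exact fun x => ⟨0, [], by simp, by simp [List.destutter'_nil, List.destutter_nil]⟩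
  | cons y t ih =>
    intro x
    by_cases hxy : x = y
    · subst hxy
      obtain ⟨i, u, h1, h2⟩ := ih x
      refine ⟨i + 1, u, ?_, ?_⟩
      · rw [List.replicate_succ, List.cons_append, ← h1]
      · rw [List.destutter'_cons_neg _ (by simp), h2]
    · exact ⟨0, y :: t, by simp, by
        rw [List.destutter'_cons_pos _ (by exact hxy), List.destutter_cons']⟩

lemma run5 (w : List Bool) (h : runCount w = 5) :
    ∃ (a : Bool) (i j k l m : ℕ),
      w = List.replicate (i+1) a ++ List.replicate (j+1) (!a) ++ List.replicate (k+1) a ++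
          List.replicate (l+1) (!a) ++ List.replicate (m+1) a := by
  unfold runCount at h
  match w, h with
  | x1 :: t1, h => ?_
  rw [List.destutter_cons'] at h
  obtain ⟨i, u1, e1, d1⟩ := runsplit t1 x1
  rw [d1] at h
  match u1, h, e1, d1 with
  | x2 :: t2, h, e1, d1 => ?_
  rw [List.destutter_cons'] at h
  obtain ⟨j, u2, e2, d2⟩ := runsplit t2 x2
  rw [d2] at h
  match u2, h, e2, d2 with
  | x3 :: t3, h, e2, d2 => ?_
  rw [List.destutter_cons'] at h
  obtain ⟨k, u3, e3, d3⟩ := runsplit t3 x3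
  rw [d3] at h
  match u3, h, e3, d3 with
  | x4 :: t4, h, e3, d3 => ?_
  rw [List.destutter_cons'] at h
  obtain ⟨l, u4, e4, d4⟩ := runsplit t4 x4
  rw [d4] at h
  match u4, h, e4, d4 with
  | x5 :: t5, h, e4, d4 => ?_
  rw [List.destutter_cons'] at h
  obtain ⟨m, u5, e5, d5⟩ := runsplit t5 x5
  rw [d5] at h
  have hu5 : u5 = [] := by
    cases u5 with
    | nil => rfl
    | cons z t =>
      rw [List.destutter_cons'] at h
      obtain ⟨_, _, _, dz⟩ := runsplit t z
      rw [dz] at h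
      simp at h
  -- chain: adjacent letters differ
  have hch : (List.destutter' (· ≠ ·) x1 t1).Chain' (· ≠ ·) :=
    List.isChain_destutter' _ _ _
  rw [d1, List.destutter_cons', d2, List.destutter_cons', d3, List.destutter_cons', d4,
    List.destutter_cons', d5, hu5] at hch
  simp [List.destutter_nil, List.Chain', List.isChain_cons_cons] at hch
  obtain ⟨h12, h23, h34, h45⟩ := hch
  have flip : ∀ p q : Bool, ¬ p = q → q = !p := by decide
  have b2 : x2 = !x1 := flip _ _ h12
  have b3 : x3 = x1 := by rw [flip _ _ h23, b2, Bool.not_not]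
  have b4 : x4 = !x1 := by rw [flip _ _ h34, b3]
  have b5 : x5 = x1 := by rw [flip _ _ h45, b4, Bool.not_not]
  refine ⟨x1, i, j, k, l, m, ?_⟩
  rw [hu5] at e5
  rw [e1, e2, e3, e4, e5, b2, b3, b4, b5]
  simp [List.append_assoc]

lemma rep_rep (n m : ℕ) (a : Bool) (X : List Bool) :
    List.replicate n a ++ (List.replicate m a ++ X) = List.replicate (n+m) a ++ X := by
  rw [← List.append_assoc, List.replicate_append_replicate]

lemma rep_cons (e : ℕ) (a : Bool) (X : List Bool) :
    List.replicate e a ++ (a :: X) = a :: (List.replicate e a ++ X) := by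
  rw [← List.singleton_append, ← List.append_assoc, ← List.replicate_succ',
    List.replicate_succ, List.cons_append]

theorem stmt15 (w : List Bool) (hlen : 8 ≤ w.length) (hruns : runCount w = 5) :
    ¬ MinimalForbidden w := by
  obtain ⟨a, i, j, k, l, m, rfl⟩ := run5 w hruns
  have hba : (!a) ≠ a := by cases a <;> simp
  have hab : a ≠ (!a) := fun h => hba h.symm
  simp only [List.length_append, List.length_replicate] at hlen
  rcases Nat.even_or_odd (k + 1) with hk | hk
  · -- middle a-run even : f = b a^(k+1) b
    obtain ⟨c, hc⟩ : ∃ c, k + 1 = (c+1) + (c+1) := by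
      obtain ⟨t, ht⟩ := hk; exact ⟨t - 1, by omega⟩
    refine not_mf ⟨List.replicate (i+1) a ++ List.replicate j (!a),
        List.replicate l (!a) ++ List.replicate (m+1) a, ?_⟩ ?_
        (meso_mk [!a] (List.replicate (c+1) a) ?_ (by simp))
    · rw [hc, List.replicate_add (c+1) (c+1) a]
      simp [List.replicate_succ, rep_cons, rep_rep, List.append_assoc]
    · rw [hc]; simp [List.length_append]; omega
    · simp [List.replicate_succ, hab]
  · rcases Nat.lt_or_ge (k+1) 3 with hk3 | hk3
    · -- k = 0
      obtain rfl : k = 0 := by obtain ⟨t, ht⟩ := hk; omega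
      rcases Nat.even_or_odd (j + 1) with hj | hj
      · -- f = a b^(j+1) a
        obtain ⟨c, hc⟩ : ∃ c, j + 1 = (c+1) + (c+1) := by
          obtain ⟨t, ht⟩ := hj; exact ⟨t - 1, by omega⟩
        refine not_mf ⟨List.replicate i a,
            List.replicate (l+1) (!a) ++ List.replicate (m+1) a, ?_⟩ ?_
            (meso_mk [a] (List.replicate (c+1) (!a)) ?_ (by simp))
        · rw [hc, List.replicate_add (c+1) (c+1) (!a)]
          simp [List.replicate_succ, rep_cons, rep_rep, List.append_assoc]
        · rw [hc]; simp [List.length_append]; omega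
        · simp [List.replicate_succ, hba]
      · rcases Nat.lt_or_ge (j+1) 3 with hj3 | hj3
        · -- j = 0
          obtain rfl : j = 0 := by obtain ⟨t, ht⟩ := hj; omega
          rcases Nat.even_or_odd (l + 1) with hl | hl
          · -- f = a b^(l+1) a
            obtain ⟨c, hc⟩ : ∃ c, l + 1 = (c+1) + (c+1) := by
              obtain ⟨t, ht⟩ := hl; exact ⟨t - 1, by omega⟩
            refine not_mf ⟨List.replicate (i+1) a ++ [!a],
                List.replicate m a, ?_⟩ ?_
                (meso_mk [a] (List.replicate (c+1) (!a)) ?_ (by simp))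
            · rw [hc, List.replicate_add (c+1) (c+1) (!a)]
              simp [List.replicate_succ, rep_cons, rep_rep, List.append_assoc]
            · rw [hc]; simp [List.length_append]; omega
            · simp [List.replicate_succ, hba]
          · rcases Nat.lt_or_ge (l+1) 3 with hl3 | hl3
            · -- j = l = k = 0 : the counting case
              obtain rfl : l = 0 := by obtain ⟨t, ht⟩ := hl; omega
              intro hMF
              obtain ⟨⟨x, x', hw, ⟨u, v, hu, hv⟩, hxx, hxnil⟩, hmin⟩ := hMF
              subst hu; subst hv
              rw [show (((List.replicate (i+1) a ++ List.replicate (0+1) (!a)) ++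
                    List.replicate (0+1) a ++ List.replicate (0+1) (!a)) ++
                    List.replicate (m+1) a)
                  = List.replicate (i+1) a ++ ((!a) :: a :: (!a) :: List.replicate (m+1) a) by
                simp [List.append_assoc]] at hw
              have hL : (v++u).length = (u++v).length := by
                simp [List.length_append, Nat.add_comm]
              have hcnt : (u ++ v).count (!a) = 1 := by
                have h2 := congrArg (List.count (!a)) hw
                have h2' := congrArg (List.count (!a)) (List.append_assoc (u ++ v) v u)
                simp only [List.count_append, List.count_cons, List.count_replicate,
                  List.count_nil, if_neg hba, beq_self_eq_true, bne_self_eq_false] at h2 ⊢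
                simp at h2
                omega
              have htake := List.take_left (l₁ := u++v) (l₂ := v++u)
              rw [← hw, List.take_append] at htake
              simp only [List.length_replicate] at htake
              set h := (u ++ v).length with hh
              have hlen2 : (i+1) + 3 + (m+1) = h + (v++u).length := by
                have h0 := congrArg List.length hw
                simp only [List.length_append, List.length_cons, List.length_replicate] at h0
                simp only [hh, List.length_append]
                omega
              have h3 := congrArg (List.count (!a)) htake
              rw [List.take_replicate] at h3
              simp only [List.count_append, List.count_replicate, beq_iff_eq,
                if_neg hab, if_neg hba] at h3 hcnt
              have hcnt2 : (((!a) :: a :: (!a) :: List.replicate (m+1) a).take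
                  (h - (i+1))).count (!a) = 1 := by omega
              have hcase : h = i + 2 ∨ h = i + 3 := by
                rcases he : h - (i+1) with _ | _ | _ | e <;> rw [he] at hcnt2
                · simp at hcnt2
                · left; omega
                · right; omega
                · exfalso
                  simp [List.take_succ_cons, List.take_replicate, List.count_cons,
                    List.count_replicate, hba] at hcnt2
              rcases hcase with hcase | hcase
              · -- m = i - 1
                obtain ⟨e, rfl⟩ : ∃ e, i = e + 2 := ⟨i - 2, by omega⟩
                obtain rfl : m = e + 1 := by omega
                refine hmin ((List.replicate (e+1) a ++ [a, !a]) ++ ([a, !a] ++ List.replicate (e+1) a))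
                  ⟨[a], [a], ?_⟩ ?_ (meso_mk (List.replicate (e+1) a) [a, !a] ?_ (by simp))
                · simp [List.replicate_succ, rep_cons, rep_rep, List.append_assoc]
                · intro hfw
                  have hfl := congrArg List.length hfw
                  simp [List.length_append] at hfl
                · cases e <;> simp [List.replicate_succ, hab, hba]
              · -- m = i + 1
                obtain ⟨e, rfl⟩ : ∃ e, i = e + 1 := ⟨i - 1, by omega⟩
                obtain rfl : m = e + 2 := by omega
                refine hmin ((List.replicate (e+1) a ++ [!a, a]) ++ ([!a, a] ++ List.replicate (e+1) a))
                  ⟨[a], [a], ?_⟩ ?_ (meso_mk (List.replicate (e+1) a) [!a, a] ?_ (by simp))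
                · simp [List.replicate_succ, rep_cons, rep_rep, List.append_assoc]
                · intro hfw
                  have hfl := congrArg List.length hfw
                  simp [List.length_append] at hfl
                  omega
                · simp [List.replicate_succ, hba]
            · -- l+1 odd ≥ 3 : f = b a b^(l+1) a
              obtain ⟨d, hd⟩ : ∃ d, l + 1 = ((d+1) + (d+1)) + 1 := by
                obtain ⟨t, ht⟩ := hl; exact ⟨t - 1, by omega⟩
              refine not_mf ⟨List.replicate (i+1) a, List.replicate m a, ?_⟩ ?_
                  (meso_mk [!a, a] (List.replicate (d+1) (!a)) ?_ (by simp))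
              · rw [hd, List.replicate_add ((d+1)+(d+1)) 1 (!a), List.replicate_add (d+1) (d+1) (!a)]
                simp [List.replicate_succ, rep_cons, rep_rep, List.append_assoc]
              · rw [hd]; simp [List.length_append]; omega
              · cases d <;> simp [List.replicate_succ, hab]
        · -- j+1 odd ≥ 3 : f = a b^(j+1) a b
          obtain ⟨d, hd⟩ : ∃ d, j + 1 = 1 + ((d+1) + (d+1)) := by
            obtain ⟨t, ht⟩ := hj; exact ⟨t - 1, by omega⟩
          refine not_mf ⟨List.replicate i a,
              List.replicate l (!a) ++ List.replicate (m+1) a, ?_⟩ ?_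
              (meso_mk [a, !a] (List.replicate (d+1) (!a)) ?_ (by simp))
          · rw [hd, List.replicate_add 1 ((d+1)+(d+1)) (!a), List.replicate_add (d+1) (d+1) (!a)]
            simp [List.replicate_succ, rep_cons, rep_rep, List.append_assoc]
          · rw [hd]; simp [List.length_append]; omega
          · simp [List.replicate_succ, hba]
    · -- k+1 odd ≥ 3
      obtain ⟨c, hc⟩ : ∃ c, k + 1 = 1 + ((c+1) + (c+1)) := by
        obtain ⟨t, ht⟩ := hk; exact ⟨t - 1, by omega⟩
      rcases le_total l j with hlj | hjl
      · -- f = b^(l+1) a^(k+1) b^(l+1) a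
        obtain ⟨d, hd⟩ : ∃ d, j + 1 = d + (l + 1) := ⟨j - l, by omega⟩
        refine not_mf ⟨List.replicate (i+1) a ++ List.replicate d (!a),
            List.replicate m a, ?_⟩ ?_
            (meso_mk (List.replicate (l+1) (!a) ++ [a]) (List.replicate (c+1) a) ?_ (by simp))
        · rw [hc, hd, List.replicate_add 1 ((c+1)+(c+1)) a, List.replicate_add (c+1) (c+1) a,
            List.replicate_add d (l+1) (!a)]
          simp [List.replicate_succ, rep_cons, rep_rep, List.append_assoc]
        · rw [hc, hd]; simp [List.length_append]; omega
        · simp [List.replicate_succ, hab]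
      · -- f = a b^(j+1) a^(k+1) b^(j+1)
        obtain ⟨d, hd⟩ : ∃ d, l + 1 = (j + 1) + d := ⟨l - j, by omega⟩
        refine not_mf ⟨List.replicate i a,
            List.replicate d (!a) ++ List.replicate (m+1) a, ?_⟩ ?_
            (meso_mk ([a] ++ List.replicate (j+1) (!a)) (List.replicate (c+1) a) ?_ (by simp))
        · rw [hc, hd, List.replicate_add 1 ((c+1)+(c+1)) a, List.replicate_add (c+1) (c+1) a,
            List.replicate_add (j+1) d (!a)]
          simp [List.replicate_succ, rep_cons, rep_rep, List.append_assoc]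
        · rw [hc, hd]; simp [List.length_append]; omega
        · cases c <;> simp [List.replicate_succ, hab]
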